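/- Let M be an MDP and q, q' states of M with q ≼ q' (q' simulates q). Then for every liveness formula ψ_L of the liveness fragment of PCTL, if q satisfies ψ_L then q' satisfies ψ_L; and for every safety formula ψ_S of the safety fragment, if q' satisfies ψ_S then q satisfies ψ_S. -/

import Mathlib

open Classical
attribute [local instance 10] Classical.propDecidable

noncomputable section

universe u v w

/-- A sub-probability measure on a finite set `Q`. -/
structure SubProb (Q : Type u) [Fintype Q] where
  val : Q → ℝ
  nonneg : ∀ q, 0 ≤ val q
  sum_le_one : ∑ q, val q ≤ 1

namespace SubProb

variable {Q : Type u} {Q' : Type v} [Fintype Q] [Fintype Q']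

/-- The measure of a set of states. -/
def mass (μ : SubProb Q) (A : Set Q) : ℝ := ∑ q, A.indicator μ.val q

/-- The zero sub-probability measure. -/
def zero (Q : Type u) [Fintype Q] : SubProb Q :=
  ⟨fun _ => 0, fun _ => le_refl 0, by simp⟩

/-- Extension (by zero) of a sub-probability measure to a disjoint sum (left). -/
def toLeft (μ : SubProb Q) : SubProb (Q ⊕ Q') where
  val := Sum.elim μ.val fun _ => 0
  nonneg := by rintro (q | q); exacts [μ.nonneg q, le_refl 0]
  sum_le_one := by simpa [Fintype.sum_sum_type] using μ.sum_le_one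

/-- Extension (by zero) of a sub-probability measure to a disjoint sum (right). -/
def toRight (μ : SubProb Q') : SubProb (Q ⊕ Q') where
  val := Sum.elim (fun _ => 0) μ.val
  nonneg := by rintro (q | q); exacts [le_refl 0, μ.nonneg q]
  sum_le_one := by simpa [Fintype.sum_sum_type] using μ.sum_le_one

end SubProb

/-- The image of a set under a binary relation. -/
def relImage {A : Type u} {B : Type v} (R : A → B → Prop) (S : Set A) : Set B :=
  {b | ∃ a ∈ S, R a b}

/-- A set is `R`-closed if its image under `R` is itself. -/
def RClosed {Q : Type u} (R : Q → Q → Prop) (A : Set Q) : Prop := relImage R A = A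

/-- `μ ≼_R μ'` : `μ'` simulates `μ` with respect to `R`. -/
def SubProb.simLE {Q : Type u} [Fintype Q] (R : Q → Q → Prop) (μ μ' : SubProb Q) : Prop :=
  ∀ A : Set Q, RClosed R A → μ.mass A ≤ μ'.mass A

/-- `μ ≈_R μ'` : `μ` is equivalent to `μ'` with respect to `R`. -/
def SubProb.simEq {Q : Type u} [Fintype Q] (R : Q → Q → Prop) (μ μ' : SubProb Q) : Prop :=
  ∀ A : Set Q, RClosed R A → μ.mass A = μ'.mass A

/-- A (finite) Markov decision process over atomic propositions `AP`. -/
structure MDP (Q : Type u) [Fintype Q] (AP : Type w) where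
  init : Q
  trans : Q → Finset (SubProb Q)
  trans_nonempty : ∀ q, (trans q).Nonempty
  label : Q → Set AP

variable {Q : Type u} {Q' : Type v} {AP : Type w} [Fintype Q] [Fintype Q']

/-- A simulation relation on (the state space of) an MDP: a preorder such that related
states have the same labels and every transition of the smaller state is simulated. -/
def IsSimulation (M : MDP Q AP) (R : Q → Q → Prop) : Prop :=
  Reflexive R ∧ Transitive R ∧
    ∀ q q', R q q' → M.label q = M.label q' ∧
      ∀ μ ∈ M.trans q, ∃ μ' ∈ M.trans q', SubProb.simLE R μ μ'

/-- A bisimulation on (the state space of) an MDP. -/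
def IsBisimulation (M : MDP Q AP) (R : Q → Q → Prop) : Prop :=
  Equivalence R ∧
    ∀ q q', R q q' → M.label q = M.label q' ∧
      ∀ μ ∈ M.trans q, ∃ μ' ∈ M.trans q', SubProb.simEq R μ μ'

/-- The direct sum of two MDPs (with the initial state of the first as initial state). -/
def MDP.dsum (M : MDP Q AP) (M' : MDP Q' AP) : MDP (Q ⊕ Q') AP where
  init := Sum.inl M.init
  trans := fun x =>
    match x with
    | .inl q => (M.trans q).image SubProb.toLeft
    | .inr q => (M'.trans q).image SubProb.toRight
  trans_nonempty := by
    rintro (q | q)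
    · exact (M.trans_nonempty q).image _
    · exact (M'.trans_nonempty q).image _
  label := Sum.elim M.label M'.label

/-- `M ≼ M'` : the MDP `M'` simulates the MDP `M`. -/
def MDP.Sim (M : MDP Q AP) (M' : MDP Q' AP) : Prop :=
  ∃ R : (Q ⊕ Q') → (Q ⊕ Q') → Prop,
    IsSimulation (M.dsum M') R ∧ R (Sum.inl M.init) (Sum.inr M'.init)

/-- `M ≈ M'` : the MDPs `M` and `M'` are bisimilar. -/
def MDP.Bisim (M : MDP Q AP) (M' : MDP Q' AP) : Prop :=
  ∃ R : (Q ⊕ Q') → (Q ⊕ Q') → Prop,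
    IsBisimulation (M.dsum M') R ∧ R (Sum.inl M.init) (Sum.inr M'.init)

/-- The canonical-form relation `id_Q ∪ R₁ ∪ id_{Q'}` on a disjoint sum. -/
def canonRel (R₁ : Q → Q' → Prop) : (Q ⊕ Q') → (Q ⊕ Q') → Prop
  | .inl a, .inl b => a = b
  | .inl a, .inr b => R₁ a b
  | .inr _, .inl _ => False
  | .inr a, .inr b => a = b

/-- `R₁ ⊆ Q × Q'` is a canonical simulation of `M` by `M'`. -/
def IsCanonSim (M : MDP Q AP) (M' : MDP Q' AP) (R₁ : Q → Q' → Prop) : Prop :=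
  IsSimulation (M.dsum M') (canonRel R₁)

/-- The edge relation of the unlabeled underlying graph of an MDP. -/
def MDP.edge (M : MDP Q AP) (q₁ q₂ : Q) : Prop :=
  ∃ μ ∈ M.trans q₁, 0 < μ.val q₂

/-- A sub-probability measure on `Q` viewed as a measure on `Q × Fin (k+1)`
concentrated on level `j`. -/
def SubProb.toLevel {k : ℕ} (μ : SubProb Q) (j : Fin (k + 1)) : SubProb (Q × Fin (k + 1)) where
  val := fun x => if x.2 = j then μ.val x.1 else 0
  nonneg := by
    intro x; split
    · exact μ.nonneg x.1
    · exact le_refl 0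
  sum_le_one := by
    rw [Fintype.sum_prod_type]
    simpa using μ.sum_le_one

/-- The `k`-th unrolling of an MDP rooted at `q`. States at level `j+1` transition to the
corresponding states at level `j`; states at level `0` have only the zero transition. -/
def MDP.unroll (M : MDP Q AP) (q : Q) (k : ℕ) : MDP (Q × Fin (k + 1)) AP where
  init := (q, Fin.last k)
  trans := fun x =>
    if h : (x.2 : ℕ) = 0 then {SubProb.zero _}
    else (M.trans x.1).image fun μ =>
      μ.toLevel ⟨(x.2 : ℕ) - 1, Nat.lt_of_le_of_lt (Nat.sub_le _ _) x.2.isLt⟩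
  trans_nonempty := by
    intro x; split
    · simp
    · exact (M.trans_nonempty x.1).image _
  label := fun x => M.label x.1
mutual
/-- The safety fragment of PCTL. -/
inductive SafeF (AP : Type w) : Type w
  | tt : SafeF AP
  | ff : SafeF AP
  | atom : AP → SafeF AP
  | natom : AP → SafeF AP
  | and : SafeF AP → SafeF AP → SafeF AP
  | or : SafeF AP → SafeF AP → SafeF AP
  | pnextLt : (p : ℚ) → 0 ≤ p → p ≤ 1 → LiveF AP → SafeF AP
  | pnextLe : (p : ℚ) → 0 ≤ p → p ≤ 1 → LiveF AP → SafeF AP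
  | puntilLt : (p : ℚ) → 0 ≤ p → p ≤ 1 → LiveF AP → LiveF AP → SafeF AP
  | puntilLe : (p : ℚ) → 0 ≤ p → p ≤ 1 → LiveF AP → LiveF AP → SafeF AP

/-- The liveness fragment of PCTL. -/
inductive LiveF (AP : Type w) : Type w
  | tt : LiveF AP
  | ff : LiveF AP
  | atom : AP → LiveF AP
  | natom : AP → LiveF AP
  | and : LiveF AP → LiveF AP → LiveF AP
  | or : LiveF AP → LiveF AP → LiveF AP
  | nnextLt : (p : ℚ) → 0 ≤ p → p ≤ 1 → LiveF AP → LiveF AP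
  | nnextLe : (p : ℚ) → 0 ≤ p → p ≤ 1 → LiveF AP → LiveF AP
  | nuntilLt : (p : ℚ) → 0 ≤ p → p ≤ 1 → LiveF AP → LiveF AP → LiveF AP
  | nuntilLe : (p : ℚ) → 0 ≤ p → p ≤ 1 → LiveF AP → LiveF AP → LiveF AP
end

/-- A (history-dependent) scheduler for an MDP. -/
structure Sched (M : MDP Q AP) where
  choice : List Q → Q → SubProb Q
  valid : ∀ h q, choice h q ∈ M.trans q

/-- The probability, under scheduler `σ` with current history `h`, that an until property
`s1 U s2` is satisfied from `q` within `n` steps. -/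
def untilProbN (M : MDP Q AP) (σ : Sched M) (s1 s2 : Set Q) : ℕ → List Q → Q → ℝ
  | 0, _, q => if q ∈ s2 then 1 else 0
  | n + 1, h, q =>
    if q ∈ s2 then 1
    else if q ∈ s1 then
      ∑ q', (σ.choice h q).val q' * untilProbN M σ s1 s2 n (h ++ [q]) q'
    else 0

/-- The probability under scheduler `σ` that `s1 U s2` is satisfied from `q`. -/
def untilProb (M : MDP Q AP) (σ : Sched M) (s1 s2 : Set Q) (q : Q) : ℝ :=
  ⨆ n : ℕ, untilProbN M σ s1 s2 n [] q

mutual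
/-- Satisfaction of safety formulas at a state of an MDP (under all schedulers). -/
def satS (M : MDP Q AP) : SafeF AP → Q → Prop
  | .tt, _ => True
  | .ff, _ => False
  | .atom a, q => a ∈ M.label q
  | .natom a, q => a ∉ M.label q
  | .and φ ψ, q => satS M φ q ∧ satS M ψ q
  | .or φ ψ, q => satS M φ q ∨ satS M ψ q
  | .pnextLt p _ _ ψ, q => ∀ μ ∈ M.trans q, μ.mass {q' | satL M ψ q'} < (p : ℝ)
  | .pnextLe p _ _ ψ, q => ∀ μ ∈ M.trans q, μ.mass {q' | satL M ψ q'} ≤ (p : ℝ)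
  | .puntilLt p _ _ ψ1 ψ2, q =>
    ∀ σ : Sched M, untilProb M σ {q' | satL M ψ1 q'} {q' | satL M ψ2 q'} q < (p : ℝ)
  | .puntilLe p _ _ ψ1 ψ2, q =>
    ∀ σ : Sched M, untilProb M σ {q' | satL M ψ1 q'} {q' | satL M ψ2 q'} q ≤ (p : ℝ)

/-- Satisfaction of liveness formulas at a state of an MDP. -/
def satL (M : MDP Q AP) : LiveF AP → Q → Prop
  | .tt, _ => True
  | .ff, _ => False
  | .atom a, q => a ∈ M.label q
  | .natom a, q => a ∉ M.label q
  | .and φ ψ, q => satL M φ q ∧ satL M ψ q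
  | .or φ ψ, q => satL M φ q ∨ satL M ψ q
  | .nnextLt p _ _ ψ, q => ¬ ∀ μ ∈ M.trans q, μ.mass {q' | satL M ψ q'} < (p : ℝ)
  | .nnextLe p _ _ ψ, q => ¬ ∀ μ ∈ M.trans q, μ.mass {q' | satL M ψ q'} ≤ (p : ℝ)
  | .nuntilLt p _ _ ψ1 ψ2, q =>
    ¬ ∀ σ : Sched M, untilProb M σ {q' | satL M ψ1 q'} {q' | satL M ψ2 q'} q < (p : ℝ)
  | .nuntilLe p _ _ ψ1 ψ2, q =>
    ¬ ∀ σ : Sched M, untilProb M σ {q' | satL M ψ1 q'} {q' | satL M ψ2 q'} q ≤ (p : ℝ)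
end
mutual
/-- Weak safety formulas: safety formulas using only `≤` probability bounds. -/
def SafeF.weak : SafeF AP → Prop
  | .tt => True
  | .ff => True
  | .atom _ => True
  | .natom _ => True
  | .and φ ψ => φ.weak ∧ ψ.weak
  | .or φ ψ => φ.weak ∧ ψ.weak
  | .pnextLt _ _ _ _ => False
  | .pnextLe _ _ _ ψ => ψ.strict
  | .puntilLt _ _ _ _ _ => False
  | .puntilLe _ _ _ ψ1 ψ2 => ψ1.strict ∧ ψ2.strict

/-- Strict liveness formulas: liveness formulas using only `≤` probability bounds. -/
def LiveF.strict : LiveF AP → Prop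
  | .tt => True
  | .ff => True
  | .atom _ => True
  | .natom _ => True
  | .and φ ψ => φ.strict ∧ ψ.strict
  | .or φ ψ => φ.strict ∧ ψ.strict
  | .nnextLt _ _ _ _ => False
  | .nnextLe _ _ _ ψ => ψ.strict
  | .nuntilLt _ _ _ _ _ => False
  | .nuntilLe _ _ _ ψ1 ψ2 => ψ1.strict ∧ ψ2.strict
end

/-- An equivalence relation is compatible with an MDP if related states have equal labels. -/
def Compatible (M : MDP Q AP) (s : Setoid Q) : Prop :=
  ∀ q q', s.r q q' → M.label q = M.label q'

/-- The lifting of a sub-probability measure to the quotient: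
`[μ]([q]) = μ([q])`. -/
def SubProb.lift (s : Setoid Q) (μ : SubProb Q) : SubProb (Quotient s) where
  val := fun a => ∑ q, if Quotient.mk s q = a then μ.val q else 0
  nonneg := by
    intro a
    apply Finset.sum_nonneg
    intro q _
    split
    · exact μ.nonneg q
    · exact le_refl 0
  sum_le_one := by
    rw [Finset.sum_comm]
    simpa using μ.sum_le_one

/-- The abstract MDP of `M` with respect to an equivalence relation `s`. -/
def MDP.abst (M : MDP Q AP) (s : Setoid Q) : MDP (Quotient s) AP where
  init := Quotient.mk s M.init
  trans := fun a =>
    Finset.univ.biUnion fun q =>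
      if Quotient.mk s q = a then (M.trans q).image (SubProb.lift s) else ∅
  trans_nonempty := by
    intro a
    obtain ⟨q, rfl⟩ := Quotient.exists_rep a
    obtain ⟨μ, hμ⟩ := M.trans_nonempty q
    refine ⟨SubProb.lift s μ, Finset.mem_biUnion.2 ⟨q, Finset.mem_univ q, ?_⟩⟩
    rw [if_pos rfl]
    exact Finset.mem_image_of_mem _ hμ
  label := fun a => M.label a.out

/-- The abstraction relation `{(q, [q])}`. -/
def abstRel (s : Setoid Q) : Q → Quotient s → Prop := fun q a => Quotient.mk s q = a

/-- The refinement relation for `s' ⊆ s`: `[q]_{s'}` is related to `[q]_s` iff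
`[q]_{s'} ⊆ [q]_s`, equivalently they share a common element. -/
def refineRel (s' s : Setoid Q) : Quotient s' → Quotient s → Prop := fun a' a =>
  ∃ q : Q, Quotient.mk s' q = a' ∧ Quotient.mk s q = a

/-- `(E, R)` is a counterexample for the MDP `A` and safety formula `ψ`. -/
def IsCex {QA : Type v} [Fintype QA] (A : MDP QA AP) (ψ : SafeF AP) (E : MDP Q AP)
    (R : Q → QA → Prop) : Prop :=
  ¬ satS E ψ E.init ∧ IsCanonSim E A R

/-- Containment of MDPs (on a common state space): same initial state, same labels, and
each transition set injects into the corresponding one so that each transition agrees with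
its image except possibly being zero. -/
def MDPContained (M' M : MDP Q AP) : Prop :=
  M'.init = M.init ∧ (∀ q, M'.label q = M.label q) ∧
    ∀ q, ∃ f : SubProb Q → SubProb Q, Set.InjOn f (M'.trans q) ∧
      ∀ μ' ∈ M'.trans q, f μ' ∈ M.trans q ∧ ∀ q'', μ'.val q'' = (f μ').val q'' ∨ μ'.val q'' = 0

/-- A minimal counterexample. -/
def MinimalCex {QA : Type v} [Fintype QA] (A : MDP QA AP) (ψ : SafeF AP) (E : MDP Q AP)
    (R₀ : Q → QA → Prop) : Prop :=
  IsCex A ψ E R₀ ∧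
    (∀ (E₁ : MDP Q AP) (R₁ : Q → QA → Prop),
      IsCex A ψ E₁ R₁ → MDPContained E₁ E → E₁ = E) ∧
    (∀ R₁ : Q → QA → Prop,
      IsCex A ψ E R₁ → (∀ e a, R₁ e a → R₀ e a) → R₁ = R₀)

/-- The counterexample `(E, R₀)` for the abstraction `M/s` is valid and consistent with
`(M, s)`: there is a canonical (validating) simulation `R` of `E` by `M` with `α∘R ⊆ R₀`. -/
def ValidConsistent (M : MDP Q AP) (s : Setoid Q) {QE : Type v} [Fintype QE] (E : MDP QE AP)
    (R₀ : QE → Quotient s → Prop) : Prop :=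
  ∃ R : QE → Q → Prop, IsCanonSim E M R ∧ ∀ e q, R e q → R₀ e (Quotient.mk s q)

/-- The underlying graph of an MDP is a tree rooted at `r`. -/
def IsTreeGraph {V : Type u} (E : V → V → Prop) (r : V) : Prop :=
  (∀ q, ¬ E q r) ∧ (∀ q, q ≠ r → ∃! p, E p q) ∧ ∀ q, Relation.ReflTransGen E r q

namespace Stmt6Aux

variable {Q : Type u} {AP : Type w} [Fintype Q]

lemma mass_eq (μ : SubProb Q) (A : Set Q) :
    μ.mass A = ∑ q, (if q ∈ A then μ.val q else 0) := by
  unfold SubProb.mass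
  refine Finset.sum_congr rfl fun q _ => ?_
  rw [Set.indicator_apply]

lemma mass_nonneg (μ : SubProb Q) (A : Set Q) : 0 ≤ μ.mass A := by
  rw [mass_eq]
  refine Finset.sum_nonneg fun q _ => ?_
  split <;> simp [μ.nonneg q]

lemma rclosed_univ {R : Q → Q → Prop} (hrefl : Reflexive R) : RClosed R (Set.univ : Set Q) := by
  refine Set.Subset.antisymm (fun b _ => trivial) fun b _ => ⟨b, trivial, hrefl b⟩

lemma mem_of_rclosed {R : Q → Q → Prop} {A : Set Q} (hA : RClosed R A) {a b : Q}
    (ha : a ∈ A) (hab : R a b) : b ∈ A := by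
  have : b ∈ relImage R A := ⟨a, ha, hab⟩
  rwa [hA] at this

/-- Key expectation-monotonicity lemma. -/
lemma pexp_le_aux {R : Q → Q → Prop} (hrefl : Reflexive R) {μ μ' : SubProb Q}
    (h : SubProb.simLE R μ μ') :
    ∀ (n : ℕ) (g : Q → ℝ), (Finset.image g Finset.univ).card ≤ n →
      (∀ q, 0 ≤ g q) → (∀ a b, R a b → g a ≤ g b) →
      (∑ q, μ.val q * g q) ≤ ∑ q, μ'.val q * g q := by
  intro n
  induction n with
  | zero =>
    intro g hcard _ _
    have : (Finset.image g Finset.univ).card = 0 := Nat.le_zero.mp hcard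
    have hu : (Finset.univ : Finset Q) = ∅ := by
      simpa using Finset.card_eq_zero.mp this
    rw [hu]; simp
  | succ n IH =>
    intro g hcard hg0 hgm
    by_cases hQ : (Finset.univ : Finset Q).Nonempty
    swap
    · rw [Finset.not_nonempty_iff_eq_empty.mp hQ]; simp
    have hIne : (Finset.image g Finset.univ).Nonempty := hQ.image g
    set I := Finset.image g Finset.univ with hI
    set t := I.max' hIne with ht
    by_cases hone : I.card ≤ 1
    · -- constant case
      have hconst : ∀ q : Q, g q = t :=
        fun q => Finset.card_le_one.mp hone (g q)
          (Finset.mem_image_of_mem g (Finset.mem_univ q)) t (I.max'_mem hIne)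
      have ht0 : 0 ≤ t := (hconst hQ.choose) ▸ hg0 hQ.choose
      have hmass : μ.mass Set.univ ≤ μ'.mass Set.univ := h _ (rclosed_univ hrefl)
      rw [mass_eq, mass_eq] at hmass
      simp only [Set.mem_univ, if_true] at hmass
      calc ∑ q, μ.val q * g q = (∑ q, μ.val q) * t := by
            rw [Finset.sum_mul]; exact Finset.sum_congr rfl fun q _ => by rw [hconst q]
        _ ≤ (∑ q, μ'.val q) * t := mul_le_mul_of_nonneg_right hmass ht0
        _ = ∑ q, μ'.val q * g q := by
            rw [Finset.sum_mul]; exact Finset.sum_congr rfl fun q _ => by rw [hconst q]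
    · -- at least two values
      have h2 : 1 ≤ (I.erase t).card := by
        rw [Finset.card_erase_of_mem (I.max'_mem hIne)]
        exact Nat.le_sub_of_add_le (Nat.lt_of_not_le hone)
      have hIe : (I.erase t).Nonempty := Finset.card_pos.mp h2
      set t2 := (I.erase t).max' hIe with ht2
      have ht2mem : t2 ∈ I.erase t := (I.erase t).max'_mem hIe
      have ht2I : t2 ∈ I := Finset.mem_of_mem_erase ht2mem
      have ht2ne : t2 ≠ t := Finset.ne_of_mem_erase ht2mem
      have ht2le : t2 ≤ t := I.le_max' t2 ht2I
      have ht2lt : t2 < t := lt_of_le_of_ne ht2le ht2ne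
      have ht2nn : 0 ≤ t2 := by
        obtain ⟨q2, _, hq2⟩ := Finset.mem_image.mp ht2I
        exact hq2 ▸ hg0 q2
      have hle_t : ∀ q : Q, g q ≤ t := fun q =>
        I.le_max' (g q) (Finset.mem_image_of_mem g (Finset.mem_univ q))
      have hle_t2 : ∀ q : Q, g q ≠ t → g q ≤ t2 := fun q hq =>
        (I.erase t).le_max' (g q)
          (Finset.mem_erase.mpr ⟨hq, Finset.mem_image_of_mem g (Finset.mem_univ q)⟩)
      set S : Set Q := {q | g q = t} with hS
      have hSclosed : RClosed R S := by
        refine Set.Subset.antisymm ?_ fun b hb => ⟨b, hb, hrefl b⟩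
        rintro b ⟨a, (ha : g a = t), hab⟩
        exact le_antisymm (hle_t b) (ha ▸ hgm a b hab)
      set g' : Q → ℝ := fun q => min (g q) t2 with hg'
      have hsplit : ∀ q, g q = g' q + (t - t2) * (if q ∈ S then 1 else 0) := by
        intro q
        by_cases hq : g q = t
        · have : q ∈ S := hq
          simp only [this, if_pos, hg']
          rw [hq, min_eq_right ht2le]; ring
        · have : q ∉ S := hq
          simp only [this, if_neg, not_false_iff, hg']
          rw [min_eq_left (hle_t2 q hq)]; ring
      have hcard' : (Finset.image g' Finset.univ).card ≤ n := by
        have hsub : Finset.image g' Finset.univ ⊆ I.erase t := by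
          intro v hv
          obtain ⟨q, _, hq⟩ := Finset.mem_image.mp hv
          by_cases hqt : g q = t
          · have : v = t2 := by
              rw [← hq]; show min (g q) t2 = t2; rw [hqt]; exact min_eq_right ht2le
            exact this ▸ ht2mem
          · have : v = g q := by
              rw [← hq]; exact min_eq_left (hle_t2 q hqt)
            exact Finset.mem_erase.mpr ⟨this ▸ hqt,
              this ▸ Finset.mem_image_of_mem g (Finset.mem_univ q)⟩
        calc (Finset.image g' Finset.univ).card ≤ (I.erase t).card :=
              Finset.card_le_card hsub
          _ = I.card - 1 := Finset.card_erase_of_mem (I.max'_mem hIne)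
          _ ≤ n := Nat.sub_le_iff_le_add.mpr hcard
      have hg'0 : ∀ q, 0 ≤ g' q := fun q => le_min (hg0 q) ht2nn
      have hg'm : ∀ a b, R a b → g' a ≤ g' b := fun a b hab =>
        min_le_min (hgm a b hab) le_rfl
      have hIH := IH g' hcard' hg'0 hg'm
      have hmassS := h S hSclosed
      rw [mass_eq, mass_eq] at hmassS
      have hrw : ∀ (ν : SubProb Q), ∑ q, ν.val q * g q =
          (∑ q, ν.val q * g' q) + (t - t2) * ∑ q, (if q ∈ S then ν.val q else 0) := by
        intro ν
        rw [Finset.mul_sum, ← Finset.sum_add_distrib]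
        refine Finset.sum_congr rfl fun q _ => ?_
        by_cases hq : q ∈ S
        · have h1 : g q = t := hq
          have h2' : g' q = t2 := by
            show min (g q) t2 = t2; rw [h1]; exact min_eq_right ht2le
          rw [if_pos hq, h1, h2']; ring
        · have h2' : g' q = g q := min_eq_left (hle_t2 q hq)
          rw [if_neg hq, h2']; ring
      rw [hrw μ, hrw μ']
      exact add_le_add hIH (mul_le_mul_of_nonneg_left hmassS (by linarith))

lemma pexp_le {R : Q → Q → Prop} (hrefl : Reflexive R) {μ μ' : SubProb Q}
    (h : SubProb.simLE R μ μ') (g : Q → ℝ) (hg0 : ∀ q, 0 ≤ g q)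
    (hgm : ∀ a b, R a b → g a ≤ g b) :
    (∑ q, μ.val q * g q) ≤ ∑ q, μ'.val q * g q :=
  pexp_le_aux hrefl h _ g le_rfl hg0 hgm

section Bellman

variable (M : MDP Q AP) (s1 s2 : Set Q)

/-- Bellman iterates for the maximal until probability. -/
def bval : ℕ → Q → ℝ
  | 0, q => if q ∈ s2 then 1 else 0
  | n+1, q =>
    if q ∈ s2 then 1
    else if q ∈ s1 then
      (M.trans q).sup' (M.trans_nonempty q) (fun μ => ∑ c, μ.val c * bval n c)
    else 0

lemma bval_nonneg : ∀ n q, 0 ≤ bval M s1 s2 n q := by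
  intro n
  induction n with
  | zero => intro q; simp only [bval]; split <;> norm_num
  | succ n IH =>
    intro q; simp only [bval]
    split
    · norm_num
    split
    · refine le_trans ?_ (Finset.le_sup' _ (M.trans_nonempty q).choose_spec)
      exact Finset.sum_nonneg fun c _ => mul_nonneg (SubProb.nonneg _ c) (IH c)
    · exact le_refl 0

lemma bval_le_one : ∀ n q, bval M s1 s2 n q ≤ 1 := by
  intro n
  induction n with
  | zero => intro q; simp only [bval]; split <;> norm_num
  | succ n IH =>
    intro q; simp only [bval]
    split
    · norm_num
    split
    · refine Finset.sup'_le _ _ fun μ _ => ?_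
      calc ∑ c, μ.val c * bval M s1 s2 n c ≤ ∑ c, μ.val c := by
            refine Finset.sum_le_sum fun c _ => ?_
            calc μ.val c * bval M s1 s2 n c ≤ μ.val c * 1 :=
                  mul_le_mul_of_nonneg_left (IH c) (SubProb.nonneg _ c)
              _ = μ.val c := mul_one _
        _ ≤ 1 := μ.sum_le_one
    · norm_num

lemma bval_le_succ : ∀ n q, bval M s1 s2 n q ≤ bval M s1 s2 (n + 1) q := by
  intro n
  induction n with
  | zero =>
    intro q; simp only [bval]
    split
    · norm_num
    split
    · refine le_trans ?_ (Finset.le_sup' _ (M.trans_nonempty q).choose_spec)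
      refine Finset.sum_nonneg fun c _ =>
        mul_nonneg (SubProb.nonneg _ c) (bval_nonneg M s1 s2 0 c)
    · exact le_refl 0
  | succ n IH =>
    intro q; simp only [bval]
    split
    · norm_num
    split
    · refine Finset.sup'_le _ _ fun μ hμ => ?_
      refine le_trans ?_ (Finset.le_sup' _ hμ)
      exact Finset.sum_le_sum fun c _ =>
        mul_le_mul_of_nonneg_left (IH c) (SubProb.nonneg _ c)
    · exact le_refl 0

lemma bval_monotone (q : Q) : Monotone fun n => bval M s1 s2 n q :=
  monotone_nat_of_le_succ fun n => bval_le_succ M s1 s2 n q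

/-- The optimal until value. -/
def Vopt (q : Q) : ℝ := ⨆ n, bval M s1 s2 n q

lemma bval_bdd (q : Q) : BddAbove (Set.range fun n => bval M s1 s2 n q) := by
  refine ⟨1, ?_⟩; rintro x ⟨n, rfl⟩; exact bval_le_one M s1 s2 n q

lemma bval_le_Vopt (n : ℕ) (q : Q) : bval M s1 s2 n q ≤ Vopt M s1 s2 q :=
  le_ciSup (bval_bdd M s1 s2 q) n

lemma Vopt_nonneg (q : Q) : 0 ≤ Vopt M s1 s2 q :=
  le_trans (bval_nonneg M s1 s2 0 q) (bval_le_Vopt M s1 s2 0 q)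

lemma Vopt_le_one (q : Q) : Vopt M s1 s2 q ≤ 1 :=
  ciSup_le fun n => bval_le_one M s1 s2 n q

lemma Vopt_eq_one {q : Q} (h : q ∈ s2) : Vopt M s1 s2 q = 1 := by
  refine le_antisymm (Vopt_le_one M s1 s2 q) ?_
  refine le_trans ?_ (bval_le_Vopt M s1 s2 0 q)
  simp [bval, h]

lemma Vopt_eq_zero {q : Q} (h1 : q ∉ s1) (h2 : q ∉ s2) : Vopt M s1 s2 q = 0 := by
  have hb : ∀ n, bval M s1 s2 n q = 0 := by
    intro n; cases n <;> simp [bval, h1, h2]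
  unfold Vopt
  rw [show (fun n => bval M s1 s2 n q) = fun _ => (0 : ℝ) from funext hb]
  exact ciSup_const

lemma Vopt_mem_cases {q : Q} (h : 0 < Vopt M s1 s2 q) : q ∈ s1 ∨ q ∈ s2 := by
  by_contra hc
  push_neg at hc
  rw [Vopt_eq_zero M s1 s2 hc.1 hc.2] at h
  exact lt_irrefl 0 h

lemma untilProbN_nonneg (σ : Sched M) : ∀ n h q, 0 ≤ untilProbN M σ s1 s2 n h q := by
  intro n
  induction n with
  | zero => intro h q; simp only [untilProbN]; split <;> norm_num
  | succ n IH =>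
    intro h q; simp only [untilProbN]
    split
    · norm_num
    split
    · exact Finset.sum_nonneg fun c _ => mul_nonneg (SubProb.nonneg _ c) (IH _ c)
    · exact le_refl 0

lemma untilProbN_le_bval (σ : Sched M) : ∀ n h q,
    untilProbN M σ s1 s2 n h q ≤ bval M s1 s2 n q := by
  intro n
  induction n with
  | zero => intro h q; simp only [untilProbN, bval]; exact le_refl _
  | succ n IH =>
    intro h q; simp only [untilProbN, bval]
    split
    · exact le_refl 1
    split
    · refine le_trans ?_ (Finset.le_sup' _ (σ.valid h q))
      exact Finset.sum_le_sum fun c _ =>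
        mul_le_mul_of_nonneg_left (IH _ c) (SubProb.nonneg _ c)
    · exact le_refl 0

lemma untilProb_le_Vopt (σ : Sched M) (q : Q) :
    untilProb M σ s1 s2 q ≤ Vopt M s1 s2 q := by
  refine ciSup_le fun n => ?_
  exact le_trans (untilProbN_le_bval M s1 s2 σ n [] q) (bval_le_Vopt M s1 s2 n q)

/-- sum/sup exchange. -/
lemma sum_mul_ciSup (μ : SubProb Q) (f : ℕ → Q → ℝ)
    (hm : ∀ c, Monotone fun n => f n c) (hb : ∀ c, BddAbove (Set.range fun n => f n c)) :
    (⨆ n, ∑ c, μ.val c * f n c) = ∑ c, μ.val c * ⨆ n, f n c := by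
  have h1 : ∀ c : Q, Filter.Tendsto (fun n => f n c) Filter.atTop (nhds (⨆ n, f n c)) :=
    fun c => tendsto_atTop_ciSup (hm c) (hb c)
  have h2 : Filter.Tendsto (fun n => ∑ c, μ.val c * f n c) Filter.atTop
      (nhds (∑ c, μ.val c * ⨆ n, f n c)) := by
    refine tendsto_finset_sum _ fun c _ => Filter.Tendsto.const_mul _ (h1 c)
  have hmono : Monotone fun n => ∑ c, μ.val c * f n c := by
    intro a b hab
    exact Finset.sum_le_sum fun c _ =>
      mul_le_mul_of_nonneg_left (hm c hab) (SubProb.nonneg _ c)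
  have hbdd : BddAbove (Set.range fun n => ∑ c, μ.val c * f n c) := by
    refine ⟨∑ c, μ.val c * ⨆ n, f n c, ?_⟩
    rintro x ⟨n, rfl⟩
    exact hmono.ge_of_tendsto h2 n
  exact tendsto_nhds_unique (tendsto_atTop_ciSup hmono hbdd) h2

lemma sum_Vopt_le {q : Q} (h1 : q ∈ s1) (h2 : q ∉ s2) {μ : SubProb Q}
    (hμ : μ ∈ M.trans q) : ∑ c, μ.val c * Vopt M s1 s2 c ≤ Vopt M s1 s2 q := by
  simp only [Vopt]
  rw [← sum_mul_ciSup μ _ (fun c => bval_monotone M s1 s2 c) (fun c => bval_bdd M s1 s2 c)]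
  refine ciSup_le fun n => ?_
  refine le_trans ?_ (bval_le_Vopt M s1 s2 (n + 1) q)
  simp only [bval, h2, h1, if_false, if_true]
  exact Finset.le_sup' (fun ν => ∑ c, ν.val c * bval M s1 s2 n c) hμ

lemma Vopt_fix {q : Q} (h1 : q ∈ s1) (h2 : q ∉ s2) :
    Vopt M s1 s2 q =
      (M.trans q).sup' (M.trans_nonempty q) (fun μ => ∑ c, μ.val c * Vopt M s1 s2 c) := by
  refine le_antisymm ?_ (Finset.sup'_le _ _ fun μ hμ => sum_Vopt_le M s1 s2 h1 h2 hμ)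
  refine ciSup_le fun n => ?_
  cases n with
  | zero =>
    refine le_trans ?_ (Finset.le_sup' _ (M.trans_nonempty q).choose_spec)
    simp only [bval, h2, if_false]
    · exact Finset.sum_nonneg fun c _ =>
        mul_nonneg (SubProb.nonneg _ c) (Vopt_nonneg M s1 s2 c)
  | succ n =>
    simp only [bval, h2, h1, if_false, if_true]
    refine Finset.sup'_le _ _ fun μ hμ => ?_
    refine le_trans ?_ (Finset.le_sup' _ hμ)
    exact Finset.sum_le_sum fun c _ =>
      mul_le_mul_of_nonneg_left (bval_le_Vopt M s1 s2 n c) (SubProb.nonneg _ c)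

/-- There is an optimal action. -/
lemma exists_opt_action {q : Q} (h1 : q ∈ s1) (h2 : q ∉ s2) :
    ∃ μ ∈ M.trans q, ∑ c, μ.val c * Vopt M s1 s2 c = Vopt M s1 s2 q := by
  obtain ⟨μ, hμ, hval⟩ := Finset.exists_mem_eq_sup' (M.trans_nonempty q)
    (fun μ => ∑ c, μ.val c * Vopt M s1 s2 c)
  exact ⟨μ, hμ, by rw [Vopt_fix M s1 s2 h1 h2, hval]⟩

lemma bval_mono_R {R : Q → Q → Prop} (hR : IsSimulation M R)
    (hc1 : RClosed R s1) (hc2 : RClosed R s2) :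
    ∀ n a b, R a b → bval M s1 s2 n a ≤ bval M s1 s2 n b := by
  intro n
  induction n with
  | zero =>
    intro a b hab
    simp only [bval]
    by_cases ha : a ∈ s2
    · rw [if_pos ha, if_pos (mem_of_rclosed hc2 ha hab)]
    · rw [if_neg ha]; split <;> norm_num
  | succ n IH =>
    intro a b hab
    by_cases ha2 : a ∈ s2
    · have hb2 : b ∈ s2 := mem_of_rclosed hc2 ha2 hab
      simp [bval, ha2, hb2]
    by_cases ha1 : a ∈ s1
    · have hb1 : b ∈ s1 := mem_of_rclosed hc1 ha1 hab
      by_cases hb2 : b ∈ s2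
      · refine le_trans (bval_le_one M s1 s2 _ a) ?_
        simp [bval, hb2]
      · simp only [bval, ha2, ha1, hb2, hb1, if_false, if_true]
        refine Finset.sup'_le _ _ fun μ hμ => ?_
        obtain ⟨μ', hμ', hsim⟩ := ((hR.2.2 a b hab).2 μ hμ)
        refine le_trans ?_ (Finset.le_sup' _ hμ')
        exact pexp_le hR.1 hsim _ (fun c => bval_nonneg M s1 s2 n c)
          (fun x y hxy => IH x y hxy)
    · have : bval M s1 s2 (n+1) a = 0 := by simp [bval, ha1, ha2]
      rw [this]
      exact bval_nonneg M s1 s2 _ b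

lemma Vopt_mono_R {R : Q → Q → Prop} (hR : IsSimulation M R)
    (hc1 : RClosed R s1) (hc2 : RClosed R s2) {a b : Q} (hab : R a b) :
    Vopt M s1 s2 a ≤ Vopt M s1 s2 b := by
  refine ciSup_le fun n => ?_
  exact le_trans (bval_mono_R M s1 s2 hR hc1 hc2 n a b hab) (bval_le_Vopt M s1 s2 n b)

end Bellman

section Attain

variable (M : MDP Q AP) (s1 s2 : Set Q)

lemma support_lemma {μ : SubProb Q} {g : Q → ℝ} {m : ℝ} (hm : 0 < m)
    (hle : ∀ c, 0 < μ.val c → g c ≤ m) (heq : ∑ c, μ.val c * g c = m) :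
    ∀ c, 0 < μ.val c → g c = m := by
  have hterm : ∀ c, μ.val c * g c ≤ μ.val c * m := by
    intro c
    rcases (μ.nonneg c).eq_or_lt with h | h
    · rw [← h]; simp
    · exact mul_le_mul_of_nonneg_left (hle c h) (le_of_lt h)
  have hsum : m ≤ (∑ c, μ.val c) * m := by
    calc m = ∑ c, μ.val c * g c := heq.symm
      _ ≤ ∑ c, μ.val c * m := Finset.sum_le_sum fun c _ => hterm c
      _ = (∑ c, μ.val c) * m := by rw [Finset.sum_mul]
  have h1 : (1 : ℝ) ≤ ∑ c, μ.val c := by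
    have := le_of_mul_le_mul_right (by linarith : 1 * m ≤ (∑ c, μ.val c) * m) hm
    linarith
  have hS : ∑ c, μ.val c = 1 := le_antisymm μ.sum_le_one h1
  have hzero : ∑ c, μ.val c * (m - g c) = 0 := by
    have : ∀ c ∈ Finset.univ, μ.val c * (m - g c) = μ.val c * m - μ.val c * g c :=
      fun c _ => mul_sub _ _ _
    rw [Finset.sum_congr rfl this, Finset.sum_sub_distrib, heq, ← Finset.sum_mul, hS,
      one_mul, sub_self]
  have hnn : ∀ c ∈ Finset.univ, 0 ≤ μ.val c * (m - g c) := by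
    intro c _
    rcases (μ.nonneg c).eq_or_lt with h | h
    · rw [← h]; simp
    · exact mul_nonneg (le_of_lt h) (by linarith [hle c h])
  intro c hc
  have := (Finset.sum_eq_zero_iff_of_nonneg hnn).mp hzero c (Finset.mem_univ c)
  have hgc : m - g c = 0 := by
    rcases mul_eq_zero.mp this with h | h
    · exact absurd h (ne_of_gt hc)
    · exact h
  linarith

/-- States from which the target is reachable via optimal actions in `≤ n` steps. -/
def GS : ℕ → Set Q
  | 0 => s2
  | n + 1 => GS n ∪ {q | q ∈ s1 ∧ ∃ μ ∈ M.trans q,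
      (∑ c, μ.val c * Vopt M s1 s2 c) = Vopt M s1 s2 q ∧ ∃ c, 0 < μ.val c ∧ c ∈ GS n}

def Gset : Set Q := {q | ∃ n, q ∈ GS M s1 s2 n}

lemma mem_Gset_step {q : Q} (hq1 : q ∈ s1) {μ : SubProb Q} (hμ : μ ∈ M.trans q)
    (hopt : (∑ c, μ.val c * Vopt M s1 s2 c) = Vopt M s1 s2 q)
    {c : Q} (hc : 0 < μ.val c) (hcG : c ∈ Gset M s1 s2) : q ∈ Gset M s1 s2 := by
  obtain ⟨n, hn⟩ := hcG
  exact ⟨n + 1, Or.inr ⟨hq1, μ, hμ, hopt, c, hc, hn⟩⟩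

set_option maxHeartbeats 1000000 in
/-- Every state with positive value can reach the target through optimal actions. -/
lemma pos_mem_Gset : ∀ q, 0 < Vopt M s1 s2 q → q ∈ Gset M s1 s2 := by
  intro q hVq
  by_contra hq
  set C : Finset Q :=
    Finset.univ.filter (fun c => 0 < Vopt M s1 s2 c ∧ c ∉ Gset M s1 s2) with hC
  have hCne : C.Nonempty := ⟨q, by simp [hC, hVq, hq]⟩
  obtain ⟨q₀, hq₀C, hq₀⟩ := Finset.exists_mem_eq_sup' hCne (Vopt M s1 s2)
  set m := C.sup' hCne (Vopt M s1 s2) with hmdef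
  have hmemC : ∀ c ∈ C, 0 < Vopt M s1 s2 c ∧ c ∉ Gset M s1 s2 := by
    intro c hc; simpa [hC] using (Finset.mem_filter.mp hc).2
  have hm_pos : 0 < m := lt_of_lt_of_le (hmemC q₀ hq₀C).1 (by rw [hq₀])
  have hleC : ∀ c ∈ C, Vopt M s1 s2 c ≤ m := fun c hc => Finset.le_sup' _ hc
  set A : Finset Q := C.filter (fun c => Vopt M s1 s2 c = m) with hA
  have hAne : A.Nonempty := ⟨q₀, by
    refine Finset.mem_filter.mpr ⟨hq₀C, hq₀.symm⟩⟩
  have hmemA : ∀ c ∈ A, (0 < Vopt M s1 s2 c ∧ c ∉ Gset M s1 s2) ∧ Vopt M s1 s2 c = m := by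
    intro c hc
    obtain ⟨h1, h2⟩ := Finset.mem_filter.mp hc
    exact ⟨hmemC c h1, h2⟩
  have hAs2 : ∀ c ∈ A, c ∉ s2 := by
    intro c hc hcs2
    exact ((hmemA c hc).1).2 ⟨0, hcs2⟩
  have hAs1 : ∀ c ∈ A, c ∈ s1 := by
    intro c hc
    rcases Vopt_mem_cases M s1 s2 ((hmemA c hc).1).1 with h | h
    · exact h
    · exact absurd h (hAs2 c hc)
  -- support of optimal actions from A stays in A
  have hsupp : ∀ a ∈ A, ∀ μ ∈ M.trans a,
      (∑ c, μ.val c * Vopt M s1 s2 c) = Vopt M s1 s2 a →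
      ∀ c, 0 < μ.val c → c ∈ A := by
    intro a ha μ hμ hopt c hc
    have hnotG : ∀ c', 0 < μ.val c' → c' ∉ Gset M s1 s2 := by
      intro c' hc' hc'G
      exact ((hmemA a ha).1).2 (mem_Gset_step M s1 s2 (hAs1 a ha) hμ hopt hc' hc'G)
    have hle : ∀ c', 0 < μ.val c' → Vopt M s1 s2 c' ≤ m := by
      intro c' hc'
      by_cases hV : 0 < Vopt M s1 s2 c'
      · exact hleC c' (Finset.mem_filter.mpr ⟨Finset.mem_univ c', hV, hnotG c' hc'⟩)
      · linarith [le_of_not_gt hV, hm_pos]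
    have heq : ∑ c', μ.val c' * Vopt M s1 s2 c' = m := by
      rw [hopt, (hmemA a ha).2]
    have hVc : Vopt M s1 s2 c = m := support_lemma hm_pos hle heq c hc
    refine Finset.mem_filter.mpr ⟨Finset.mem_filter.mpr
      ⟨Finset.mem_univ c, hVc ▸ hm_pos, hnotG c hc⟩, hVc⟩
  -- the penalty δ
  classical
  set dq : Q → ℝ := fun a =>
    if h : ((M.trans a).filter
        (fun μ => (∑ c, μ.val c * Vopt M s1 s2 c) ≠ Vopt M s1 s2 a)).Nonempty then
      m - ((M.trans a).filter
        (fun μ => (∑ c, μ.val c * Vopt M s1 s2 c) ≠ Vopt M s1 s2 a)).sup' h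
          (fun μ => ∑ c, μ.val c * Vopt M s1 s2 c)
    else m with hdq
  have hdq_pos : ∀ a ∈ A, 0 < dq a := by
    intro a ha
    simp only [hdq]
    split
    next hne =>
      rw [sub_pos]
      rw [Finset.sup'_lt_iff]
      intro μ hμ
      obtain ⟨hμt, hμne⟩ := Finset.mem_filter.mp hμ
      have hle := sum_Vopt_le M s1 s2 (hAs1 a ha) (hAs2 a ha) hμt
      rw [(hmemA a ha).2] at hle hμne
      exact lt_of_le_of_ne hle hμne
    next => exact hm_pos
  have hdq_le : ∀ a ∈ A, dq a ≤ m := by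
    intro a ha
    simp only [hdq]
    split
    next h hne =>
      have h0 : (0:ℝ) ≤ _ :=
        le_trans (Finset.sum_nonneg fun c _ =>
          mul_nonneg (hne.choose.nonneg c) (Vopt_nonneg M s1 s2 c))
          (Finset.le_sup' (fun μ => ∑ c, μ.val c * Vopt M s1 s2 c) hne.choose_spec)
      linarith
    next => exact le_refl m
  set δ := A.inf' hAne dq with hδ
  have hδ_pos : 0 < δ := by
    rw [hδ, Finset.lt_inf'_iff]
    exact fun a ha => hdq_pos a ha
  have hδ_le : ∀ a ∈ A, δ ≤ dq a := fun a ha => Finset.inf'_le _ ha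
  have hδm : δ ≤ m := le_trans (hδ_le _ hAne.choose_spec) (hdq_le _ hAne.choose_spec)
  -- the main claim
  have hclaim : ∀ n, ∀ a ∈ A, bval M s1 s2 n a ≤ m - δ := by
    intro n
    induction n with
    | zero =>
      intro a ha
      simp only [bval, hAs2 a ha, if_false]
      linarith
    | succ n IH =>
      intro a ha
      simp only [bval, hAs2 a ha, hAs1 a ha, if_false, if_true]
      refine Finset.sup'_le _ _ fun μ hμ => ?_
      by_cases hopt : (∑ c, μ.val c * Vopt M s1 s2 c) = Vopt M s1 s2 a
      · have hsup := hsupp a ha μ hμ hopt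
        calc ∑ c, μ.val c * bval M s1 s2 n c ≤ ∑ c, μ.val c * (m - δ) := by
              refine Finset.sum_le_sum fun c _ => ?_
              rcases (μ.nonneg c).eq_or_lt with h | h
              · rw [← h]; simp
              · exact mul_le_mul_of_nonneg_left (IH c (hsup c h)) (le_of_lt h)
          _ = (∑ c, μ.val c) * (m - δ) := by rw [Finset.sum_mul]
          _ ≤ 1 * (m - δ) := mul_le_mul_of_nonneg_right μ.sum_le_one (by linarith)
          _ = m - δ := one_mul _
      · have hμbad : μ ∈ (M.trans a).filter
            (fun ν => (∑ c, ν.val c * Vopt M s1 s2 c) ≠ Vopt M s1 s2 a) :=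
          Finset.mem_filter.mpr ⟨hμ, hopt⟩
        have hne : ((M.trans a).filter
            (fun ν => (∑ c, ν.val c * Vopt M s1 s2 c) ≠ Vopt M s1 s2 a)).Nonempty :=
          ⟨μ, hμbad⟩
        have hdqa : dq a = m - ((M.trans a).filter
            (fun ν => (∑ c, ν.val c * Vopt M s1 s2 c) ≠ Vopt M s1 s2 a)).sup' hne
              (fun ν => ∑ c, ν.val c * Vopt M s1 s2 c) := by
          simp only [hdq]
          rw [dif_pos hne]
        have hsuple : ∑ c, μ.val c * Vopt M s1 s2 c ≤ m - dq a := by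
          rw [hdqa]
          have := Finset.le_sup'
            (fun ν => ∑ c, ν.val c * Vopt M s1 s2 c) hμbad
          linarith
        calc ∑ c, μ.val c * bval M s1 s2 n c ≤ ∑ c, μ.val c * Vopt M s1 s2 c :=
              Finset.sum_le_sum fun c _ =>
                mul_le_mul_of_nonneg_left (bval_le_Vopt M s1 s2 n c) (μ.nonneg c)
          _ ≤ m - dq a := hsuple
          _ ≤ m - δ := by linarith [hδ_le a ha]
  -- contradiction
  obtain ⟨a, ha⟩ := hAne
  have : Vopt M s1 s2 a ≤ m - δ := ciSup_le fun n => hclaim n a ha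
  rw [(hmemA a ha).2] at this
  linarith

/-- Rank of a state in the optimal reachability layering. -/
def rk (q : Q) : ℕ := if h : q ∈ Gset M s1 s2 then Nat.find h else 0

lemma exists_good (q : Q) (hV : 0 < Vopt M s1 s2 q) (h2 : q ∉ s2) :
    ∃ μ, μ ∈ M.trans q ∧ (∑ c, μ.val c * Vopt M s1 s2 c) = Vopt M s1 s2 q ∧
      ∃ c, 0 < μ.val c ∧ rk M s1 s2 c < rk M s1 s2 q := by
  have hG : q ∈ Gset M s1 s2 := pos_mem_Gset M s1 s2 q hV
  have hrkq : rk M s1 s2 q = Nat.find hG := by rw [rk, dif_pos hG]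
  have hkspec : q ∈ GS M s1 s2 (Nat.find hG) := Nat.find_spec hG
  have hk0 : Nat.find hG ≠ 0 := by
    intro h0
    rw [h0] at hkspec
    exact h2 hkspec
  obtain ⟨k', hk'⟩ := Nat.exists_eq_succ_of_ne_zero hk0
  have hnot : q ∉ GS M s1 s2 k' := by
    intro hmem
    exact Nat.find_min hG (by omega) hmem
  rw [hk'] at hkspec
  rcases hkspec with h | h
  · exact absurd h hnot
  obtain ⟨hq1, μ, hμ, hopt, c, hc, hcG⟩ := h
  refine ⟨μ, hμ, hopt, c, hc, ?_⟩
  have hcGset : c ∈ Gset M s1 s2 := ⟨k', hcG⟩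
  have : rk M s1 s2 c ≤ k' := by
    rw [rk, dif_pos hcGset]
    exact Nat.find_le hcG
  omega

/-- The optimal (memoryless) choice. -/
def pick (q : Q) : SubProb Q :=
  if h : 0 < Vopt M s1 s2 q ∧ q ∉ s2 then (exists_good M s1 s2 q h.1 h.2).choose
  else (M.trans_nonempty q).choose

lemma pick_mem (q : Q) : pick M s1 s2 q ∈ M.trans q := by
  rw [pick]
  split
  next h => exact (exists_good M s1 s2 q h.1 h.2).choose_spec.1
  next => exact (M.trans_nonempty q).choose_spec

lemma pick_spec (q : Q) (h1 : 0 < Vopt M s1 s2 q) (h2 : q ∉ s2) :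
    (∑ c, (pick M s1 s2 q).val c * Vopt M s1 s2 c) = Vopt M s1 s2 q ∧
      ∃ c, 0 < (pick M s1 s2 q).val c ∧ rk M s1 s2 c < rk M s1 s2 q := by
  rw [pick, dif_pos ⟨h1, h2⟩]
  exact (exists_good M s1 s2 q h1 h2).choose_spec.2

/-- Value iterates of the optimal memoryless scheduler. -/
def wval : ℕ → Q → ℝ
  | 0, q => if q ∈ s2 then 1 else 0
  | n + 1, q =>
    if q ∈ s2 then 1
    else if q ∈ s1 then ∑ c, (pick M s1 s2 q).val c * wval n c
    else 0

lemma wval_le_bval : ∀ n q, wval M s1 s2 n q ≤ bval M s1 s2 n q := by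
  intro n
  induction n with
  | zero => intro q; simp only [wval, bval]; exact le_refl _
  | succ n IH =>
    intro q
    simp only [wval, bval]
    split
    · exact le_refl 1
    split
    · refine le_trans ?_ (Finset.le_sup' _ (pick_mem M s1 s2 q))
      exact Finset.sum_le_sum fun c _ =>
        mul_le_mul_of_nonneg_left (IH c) (SubProb.nonneg _ c)
    · exact le_refl 0

lemma wval_nonneg : ∀ n q, 0 ≤ wval M s1 s2 n q := by
  intro n
  induction n with
  | zero => intro q; simp only [wval]; split <;> norm_num
  | succ n IH =>
    intro q; simp only [wval]
    split
    · norm_num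
    split
    · exact Finset.sum_nonneg fun c _ => mul_nonneg (SubProb.nonneg _ c) (IH c)
    · exact le_refl 0

lemma wval_le_succ : ∀ n q, wval M s1 s2 n q ≤ wval M s1 s2 (n + 1) q := by
  intro n
  induction n with
  | zero =>
    intro q; simp only [wval]
    split
    · norm_num
    split
    · exact Finset.sum_nonneg fun c _ =>
        mul_nonneg (SubProb.nonneg _ c) (wval_nonneg M s1 s2 0 c)
    · exact le_refl 0
  | succ n IH =>
    intro q; simp only [wval]
    split
    · norm_num
    split
    · exact Finset.sum_le_sum fun c _ =>
        mul_le_mul_of_nonneg_left (IH c) (SubProb.nonneg _ c)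
    · exact le_refl 0

lemma wval_monotone (q : Q) : Monotone fun n => wval M s1 s2 n q :=
  monotone_nat_of_le_succ fun n => wval_le_succ M s1 s2 n q

def Wv (q : Q) : ℝ := ⨆ n, wval M s1 s2 n q

lemma wval_bdd (q : Q) : BddAbove (Set.range fun n => wval M s1 s2 n q) := by
  refine ⟨1, ?_⟩; rintro x ⟨n, rfl⟩
  exact le_trans (wval_le_bval M s1 s2 n q) (bval_le_one M s1 s2 n q)

lemma wval_le_Wv (n : ℕ) (q : Q) : wval M s1 s2 n q ≤ Wv M s1 s2 q :=
  le_ciSup (wval_bdd M s1 s2 q) n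

lemma Wv_nonneg (q : Q) : 0 ≤ Wv M s1 s2 q :=
  le_trans (wval_nonneg M s1 s2 0 q) (wval_le_Wv M s1 s2 0 q)

lemma Wv_le_Vopt (q : Q) : Wv M s1 s2 q ≤ Vopt M s1 s2 q :=
  ciSup_le fun n => le_trans (wval_le_bval M s1 s2 n q) (bval_le_Vopt M s1 s2 n q)

lemma Wv_eq_one {q : Q} (h : q ∈ s2) : Wv M s1 s2 q = 1 := by
  have hb : ∀ n, wval M s1 s2 n q = 1 := by
    intro n; cases n <;> simp [wval, h]
  unfold Wv
  rw [show (fun n => wval M s1 s2 n q) = fun _ => (1 : ℝ) from funext hb]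
  exact ciSup_const

lemma Wv_fix {q : Q} (h1 : q ∈ s1) (h2 : q ∉ s2) :
    Wv M s1 s2 q = ∑ c, (pick M s1 s2 q).val c * Wv M s1 s2 c := by
  refine le_antisymm (ciSup_le fun n => ?_) ?_
  · cases n with
    | zero =>
      simp only [wval, h2, if_false]
      exact Finset.sum_nonneg fun c _ =>
        mul_nonneg (SubProb.nonneg _ c) (Wv_nonneg M s1 s2 c)
    | succ n =>
      simp only [wval, h2, h1, if_false, if_true]
      exact Finset.sum_le_sum fun c _ =>
        mul_le_mul_of_nonneg_left (wval_le_Wv M s1 s2 n c) (SubProb.nonneg _ c)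
  · simp only [Wv]
    rw [← sum_mul_ciSup (pick M s1 s2 q) _ (fun c => wval_monotone M s1 s2 c)
      (fun c => wval_bdd M s1 s2 c)]
    refine ciSup_le fun n => ?_
    refine le_trans ?_ (wval_le_Wv M s1 s2 (n + 1) q)
    simp only [wval, h2, h1, if_false, if_true]
    exact le_refl _

/-- Attainment: the memoryless greedy-with-rank scheduler achieves the optimal value. -/
lemma Vopt_le_Wv : ∀ q, Vopt M s1 s2 q ≤ Wv M s1 s2 q := by
  by_contra hcon
  push_neg at hcon
  obtain ⟨qw, hqw⟩ := hcon
  set dfun : Q → ℝ := fun c => Vopt M s1 s2 c - Wv M s1 s2 c with hdfun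
  set D : Finset Q := Finset.univ.filter (fun c => Wv M s1 s2 c < Vopt M s1 s2 c) with hD
  have hDne : D.Nonempty := ⟨qw, by simp [hD, hqw]⟩
  obtain ⟨q₀, hq₀D, hq₀⟩ := Finset.exists_mem_eq_sup' hDne dfun
  set m := D.sup' hDne dfun with hmdef
  have hm_pos : 0 < m := by
    have : Wv M s1 s2 q₀ < Vopt M s1 s2 q₀ := by
      simpa [hD] using (Finset.mem_filter.mp hq₀D).2
    rw [hq₀, hdfun]; dsimp only; linarith
  have hdle : ∀ c, dfun c ≤ m := by
    intro c
    by_cases hc : Wv M s1 s2 c < Vopt M s1 s2 c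
    · exact Finset.le_sup' dfun (Finset.mem_filter.mpr ⟨Finset.mem_univ c, hc⟩)
    · rw [hdfun]; dsimp only; push_neg at hc; linarith
  set A : Finset Q := D.filter (fun c => dfun c = m) with hA
  have hAne : A.Nonempty := ⟨q₀, Finset.mem_filter.mpr ⟨hq₀D, hq₀.symm⟩⟩
  have hmemA : ∀ c ∈ A, dfun c = m := fun c hc => (Finset.mem_filter.mp hc).2
  have hAV : ∀ c ∈ A, 0 < Vopt M s1 s2 c := by
    intro c hc
    have h1 := hmemA c hc
    have h2 := Wv_nonneg M s1 s2 c
    rw [hdfun] at h1; dsimp only at h1; linarith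
  have hAs2 : ∀ c ∈ A, c ∉ s2 := by
    intro c hc hcs2
    have h1 := hmemA c hc
    have h2 := Wv_eq_one M s1 s2 hcs2
    have h3 := Vopt_le_one M s1 s2 c
    rw [hdfun] at h1; dsimp only at h1; linarith
  have hAs1 : ∀ c ∈ A, c ∈ s1 := by
    intro c hc
    rcases Vopt_mem_cases M s1 s2 (hAV c hc) with h | h
    · exact h
    · exact absurd h (hAs2 c hc)
  obtain ⟨qs, hqsA, hqsmin⟩ := Finset.exists_mem_eq_inf' hAne (rk M s1 s2)
  have hpick := pick_spec M s1 s2 qs (hAV qs hqsA) (hAs2 qs hqsA)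
  have hWfix := Wv_fix M s1 s2 (hAs1 qs hqsA) (hAs2 qs hqsA)
  have hdsum : ∑ c, (pick M s1 s2 qs).val c * dfun c = m := by
    have : ∀ c ∈ Finset.univ, (pick M s1 s2 qs).val c * dfun c =
        (pick M s1 s2 qs).val c * Vopt M s1 s2 c -
          (pick M s1 s2 qs).val c * Wv M s1 s2 c := by
      intro c _; rw [hdfun]; dsimp only; ring
    rw [Finset.sum_congr rfl this, Finset.sum_sub_distrib, hpick.1, ← hWfix]
    rw [← hmemA qs hqsA, hdfun]
  have hsupA : ∀ c, 0 < (pick M s1 s2 qs).val c → c ∈ A := by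
    intro c hc
    have := support_lemma hm_pos (fun c' _ => hdle c') hdsum c hc
    refine Finset.mem_filter.mpr ⟨Finset.mem_filter.mpr ⟨Finset.mem_univ c, ?_⟩, this⟩
    rw [hdfun] at this; dsimp only at this; linarith
  obtain ⟨c, hc, hrkc⟩ := hpick.2
  have hcA : c ∈ A := hsupA c hc
  have hle2 := Finset.inf'_le (rk M s1 s2) hcA
  rw [hqsmin] at hle2
  omega

/-- The optimal scheduler. -/
def schedOpt : Sched M := ⟨fun _ q => pick M s1 s2 q, fun _ q => pick_mem M s1 s2 q⟩

lemma untilProbN_schedOpt : ∀ n h q,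
    untilProbN M (schedOpt M s1 s2) s1 s2 n h q = wval M s1 s2 n q := by
  intro n
  induction n with
  | zero => intro h q; simp only [untilProbN, wval]
  | succ n IH =>
    intro h q
    simp only [untilProbN, wval]
    split
    · rfl
    split
    · have hch : ∀ h' q', ((schedOpt M s1 s2).choice h' q') = pick M s1 s2 q' :=
        fun _ _ => rfl
      rw [hch]
      exact Finset.sum_congr rfl fun c _ => by rw [IH]
    · rfl

lemma exists_opt_sched : ∃ σ : Sched M, ∀ q, Vopt M s1 s2 q ≤ untilProb M σ s1 s2 q := by
  refine ⟨schedOpt M s1 s2, fun q => ?_⟩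
  have : untilProb M (schedOpt M s1 s2) s1 s2 q = Wv M s1 s2 q := by
    unfold untilProb Wv
    exact iSup_congr fun n => untilProbN_schedOpt M s1 s2 n [] q
  rw [this]
  exact Vopt_le_Wv M s1 s2 q

end Attain

lemma closed_of_mono {R : Q → Q → Prop} (hrefl : Reflexive R) {P : Q → Prop}
    (hmono : ∀ a b, R a b → P a → P b) : RClosed R {q | P q} := by
  refine Set.Subset.antisymm ?_ fun c hc => ⟨c, hc, hrefl c⟩
  rintro c ⟨a, ha, hac⟩
  exact hmono a c hac ha

lemma until_transfer {R : Q → Q → Prop} (M : MDP Q AP) (s1 s2 : Set Q)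
    (hR : IsSimulation M R) (hc1 : RClosed R s1) (hc2 : RClosed R s2) {a b : Q}
    (hab : R a b) :
    ∃ σ' : Sched M, ∀ σ : Sched M, untilProb M σ s1 s2 a ≤ untilProb M σ' s1 s2 b := by
  obtain ⟨σ', hσ'⟩ := exists_opt_sched M s1 s2
  refine ⟨σ', fun σ => ?_⟩
  calc untilProb M σ s1 s2 a ≤ Vopt M s1 s2 a := untilProb_le_Vopt M s1 s2 σ a
    _ ≤ Vopt M s1 s2 b := Vopt_mono_R M s1 s2 hR hc1 hc2 hab
    _ ≤ untilProb M σ' s1 s2 b := hσ' b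

theorem satL_mono (M : MDP Q AP) {R : Q → Q → Prop} (hR : IsSimulation M R) :
    ∀ (ψ : LiveF AP) (a b : Q), R a b → satL M ψ a → satL M ψ b
  | .tt => fun a b _ _ => by simp [satL]
  | .ff => fun a b _ h => by simp [satL] at h
  | .atom p => fun a b hab h => by
      have hl := (hR.2.2 a b hab).1
      simp only [satL] at h ⊢
      rwa [← hl]
  | .natom p => fun a b hab h => by
      have hl := (hR.2.2 a b hab).1
      simp only [satL] at h ⊢
      rwa [← hl]
  | .and φ ψ => fun a b hab h => by
      simp only [satL] at h ⊢
      exact ⟨satL_mono M hR φ a b hab h.1, satL_mono M hR ψ a b hab h.2⟩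
  | .or φ ψ => fun a b hab h => by
      simp only [satL] at h ⊢
      rcases h with h | h
      · exact Or.inl (satL_mono M hR φ a b hab h)
      · exact Or.inr (satL_mono M hR ψ a b hab h)
  | .nnextLt p h0 h1 ψ => fun a b hab h => by
      simp only [satL] at h ⊢
      intro hball
      apply h
      intro μ hμ
      obtain ⟨μ', hμ', hsim⟩ := (hR.2.2 a b hab).2 μ hμ
      have hcl : RClosed R {c | satL M ψ c} :=
        closed_of_mono hR.1 fun x y hxy => satL_mono M hR ψ x y hxy
      exact lt_of_le_of_lt (hsim _ hcl) (hball μ' hμ')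
  | .nnextLe p h0 h1 ψ => fun a b hab h => by
      simp only [satL] at h ⊢
      intro hball
      apply h
      intro μ hμ
      obtain ⟨μ', hμ', hsim⟩ := (hR.2.2 a b hab).2 μ hμ
      have hcl : RClosed R {c | satL M ψ c} :=
        closed_of_mono hR.1 fun x y hxy => satL_mono M hR ψ x y hxy
      exact le_trans (hsim _ hcl) (hball μ' hμ')
  | .nuntilLt p h0 h1 ψ1 ψ2 => fun a b hab h => by
      simp only [satL] at h ⊢
      intro hball
      apply h
      intro σ
      have hc1 : RClosed R {c | satL M ψ1 c} :=
        closed_of_mono hR.1 fun x y hxy => satL_mono M hR ψ1 x y hxy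
      have hc2 : RClosed R {c | satL M ψ2 c} :=
        closed_of_mono hR.1 fun x y hxy => satL_mono M hR ψ2 x y hxy
      obtain ⟨σ', hσ'⟩ := until_transfer M _ _ hR hc1 hc2 hab
      exact lt_of_le_of_lt (hσ' σ) (hball σ')
  | .nuntilLe p h0 h1 ψ1 ψ2 => fun a b hab h => by
      simp only [satL] at h ⊢
      intro hball
      apply h
      intro σ
      have hc1 : RClosed R {c | satL M ψ1 c} :=
        closed_of_mono hR.1 fun x y hxy => satL_mono M hR ψ1 x y hxy
      have hc2 : RClosed R {c | satL M ψ2 c} :=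
        closed_of_mono hR.1 fun x y hxy => satL_mono M hR ψ2 x y hxy
      obtain ⟨σ', hσ'⟩ := until_transfer M _ _ hR hc1 hc2 hab
      exact le_trans (hσ' σ) (hball σ')

theorem satS_rev (M : MDP Q AP) {R : Q → Q → Prop} (hR : IsSimulation M R) :
    ∀ (ψ : SafeF AP) (a b : Q), R a b → satS M ψ b → satS M ψ a
  | .tt => fun a b _ _ => by simp [satS]
  | .ff => fun a b _ h => by simp [satS] at h
  | .atom p => fun a b hab h => by
      have hl := (hR.2.2 a b hab).1
      simp only [satS] at h ⊢
      rwa [hl]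
  | .natom p => fun a b hab h => by
      have hl := (hR.2.2 a b hab).1
      simp only [satS] at h ⊢
      rwa [hl]
  | .and φ ψ => fun a b hab h => by
      simp only [satS] at h ⊢
      exact ⟨satS_rev M hR φ a b hab h.1, satS_rev M hR ψ a b hab h.2⟩
  | .or φ ψ => fun a b hab h => by
      simp only [satS] at h ⊢
      rcases h with h | h
      · exact Or.inl (satS_rev M hR φ a b hab h)
      · exact Or.inr (satS_rev M hR ψ a b hab h)
  | .pnextLt p h0 h1 ψ => fun a b hab h => by
      simp only [satS] at h ⊢
      intro μ hμ
      obtain ⟨μ', hμ', hsim⟩ := (hR.2.2 a b hab).2 μ hμ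
      have hcl : RClosed R {c | satL M ψ c} :=
        closed_of_mono hR.1 fun x y hxy => satL_mono M hR ψ x y hxy
      exact lt_of_le_of_lt (hsim _ hcl) (h μ' hμ')
  | .pnextLe p h0 h1 ψ => fun a b hab h => by
      simp only [satS] at h ⊢
      intro μ hμ
      obtain ⟨μ', hμ', hsim⟩ := (hR.2.2 a b hab).2 μ hμ
      have hcl : RClosed R {c | satL M ψ c} :=
        closed_of_mono hR.1 fun x y hxy => satL_mono M hR ψ x y hxy
      exact le_trans (hsim _ hcl) (h μ' hμ')
  | .puntilLt p h0 h1 ψ1 ψ2 => fun a b hab h => by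
      simp only [satS] at h ⊢
      intro σ
      have hc1 : RClosed R {c | satL M ψ1 c} :=
        closed_of_mono hR.1 fun x y hxy => satL_mono M hR ψ1 x y hxy
      have hc2 : RClosed R {c | satL M ψ2 c} :=
        closed_of_mono hR.1 fun x y hxy => satL_mono M hR ψ2 x y hxy
      obtain ⟨σ', hσ'⟩ := until_transfer M _ _ hR hc1 hc2 hab
      exact lt_of_le_of_lt (hσ' σ) (h σ')
  | .puntilLe p h0 h1 ψ1 ψ2 => fun a b hab h => by
      simp only [satS] at h ⊢
      intro σ
      have hc1 : RClosed R {c | satL M ψ1 c} :=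
        closed_of_mono hR.1 fun x y hxy => satL_mono M hR ψ1 x y hxy
      have hc2 : RClosed R {c | satL M ψ2 c} :=
        closed_of_mono hR.1 fun x y hxy => satL_mono M hR ψ2 x y hxy
      obtain ⟨σ', hσ'⟩ := until_transfer M _ _ hR hc1 hc2 hab
      exact le_trans (hσ' σ) (h σ')

end Stmt6Aux

/-- Simulation preserves liveness and reflects safety: if `q ≼ q'` then every liveness
formula true at `q` is true at `q'`, and every safety formula true at `q'` is true at `q`. -/
theorem stmt6 {Q : Type u} {AP : Type w} [Fintype Q] (M : MDP Q AP) (q q' : Q)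
    (hsim : ∃ R : Q → Q → Prop, IsSimulation M R ∧ R q q') :
    (∀ ψL : LiveF AP, satL M ψL q → satL M ψL q') ∧
    (∀ ψS : SafeF AP, satS M ψS q' → satS M ψS q) := by
  obtain ⟨R, hR, hqq'⟩ := hsim
  exact ⟨fun ψL => Stmt6Aux.satL_mono M hR ψL q q' hqq',
    fun ψS => Stmt6Aux.satS_rev M hR ψS q q' hqq'⟩
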